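/- Coded unlearning is perfect for ridge regression with a one-hot code: suppose the coded shard is formed as (X̄, ȳ) = (∑ᵢ gᵢ Xᵢ, ∑ᵢ gᵢ yᵢ) from uncoded shards (Xᵢ, yᵢ), and a sample (x_u, y_u) occupying row i' of shard s' is unlearned by replacing row i' of (X̄, ȳ) with (x̄_{i'} − g_{s'} x_u, ȳ_{i'} − g_{s'} y_u). Then the resulting coded shard equals the coded shard one would obtain by encoding the uncoded dataset in which row i' of shard s' is replaced by (x_{s',i'} − x_u, y_{s',i'} − y_u); consequently the retrained ridge regression weak model equals the model trained from scratch on the updated coded data. -/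
import Mathlib


noncomputable def ridgeLoss {n D : ℕ} (X : Matrix (Fin n) (Fin D) ℝ) (y : Fin n → ℝ)
    (lam : ℝ) (w : Fin D → ℝ) : ℝ :=
  (1 / (n : ℝ)) * ∑ i, (y i - ∑ j, X i j * w j) ^ 2 + lam * ∑ j, (w j) ^ 2

/-- Uniqueness of the ridge regression minimizer (strict convexity via the midpoint trick). -/
lemma ridge_min_unique {n D : ℕ} (X : Matrix (Fin n) (Fin D) ℝ) (y : Fin n → ℝ)
    (lam : ℝ) (hlam : 0 < lam) (w w' : Fin D → ℝ)
    (hw : ∀ v, ridgeLoss X y lam w ≤ ridgeLoss X y lam v)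
    (hw' : ∀ v, ridgeLoss X y lam w' ≤ ridgeLoss X y lam v) : w = w' := by
  set m : Fin D → ℝ := fun j => (w j + w' j) / 2 with hm
  have heq : ridgeLoss X y lam w = ridgeLoss X y lam w' :=
    le_antisymm (hw w') (hw' w)
  have hfirst : ∑ i, (y i - ∑ j, X i j * m j) ^ 2 ≤
      (∑ i, (y i - ∑ j, X i j * w j) ^ 2 + ∑ i, (y i - ∑ j, X i j * w' j) ^ 2) / 2 := by
    rw [← Finset.sum_add_distrib, Finset.sum_div]
    apply Finset.sum_le_sum
    intro i _
    have h1 : ∑ j, X i j * m j = (∑ j, X i j * w j + ∑ j, X i j * w' j) / 2 := by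
      rw [← Finset.sum_add_distrib, Finset.sum_div]
      exact Finset.sum_congr rfl (fun j _ => by simp only [hm]; ring)
    rw [h1]
    nlinarith [sq_nonneg (∑ j, X i j * w j - ∑ j, X i j * w' j)]
  have hsecond : ∑ j, (m j) ^ 2 =
      (∑ j, (w j) ^ 2 + ∑ j, (w' j) ^ 2) / 2 - (∑ j, (w j - w' j) ^ 2) / 4 := by
    rw [← Finset.sum_add_distrib, Finset.sum_div, Finset.sum_div, ← Finset.sum_sub_distrib]
    exact Finset.sum_congr rfl (fun j _ => by simp only [hm]; ring)
  have hmid : ridgeLoss X y lam m ≤ ridgeLoss X y lam w - lam / 4 * ∑ j, (w j - w' j) ^ 2 := by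
    have hn : (0:ℝ) ≤ 1 / (n : ℝ) := by positivity
    unfold ridgeLoss at heq ⊢
    rw [hsecond]
    have h2 := mul_le_mul_of_nonneg_left hfirst hn
    nlinarith [heq, h2]
  have hzero : ∑ j, (w j - w' j) ^ 2 ≤ 0 := by
    have h3 := hw m
    nlinarith [hmid]
  have hall : ∀ j ∈ Finset.univ, (w j - w' j) ^ 2 = 0 := by
    rw [← Finset.sum_eq_zero_iff_of_nonneg (fun j _ => sq_nonneg _)]
    exact le_antisymm hzero (Finset.sum_nonneg fun j _ => sq_nonneg _)
  funext j
  have h4 := hall j (Finset.mem_univ j)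
  have h5 : w j - w' j = 0 := by nlinarith [h4]
  linarith

/-- Coded unlearning is perfect for ridge regression: subtracting the sample's contribution
    from the coded shard yields exactly the encoding of the updated uncoded dataset, and
    hence the retrained weak model equals the model trained from scratch on that data. -/
theorem coded_unlearning_perfect {s nb d : ℕ}
    (Xs : Fin s → Matrix (Fin nb) (Fin d) ℝ) (ys : Fin s → Fin nb → ℝ)
    (g : Fin s → ℝ) (s' : Fin s) (i' : Fin nb) (xu : Fin d → ℝ) (yu : ℝ)
    (lam : ℝ) (hlam : 0 < lam) (hnb : 0 < nb)
    -- coded shard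
    (Xbar : Matrix (Fin nb) (Fin d) ℝ) (ybar : Fin nb → ℝ)
    (hXbar : Xbar = ∑ i, g i • Xs i) (hybar : ybar = ∑ i, g i • ys i)
    -- updated coded shard after subtracting the unlearned sample
    (Xtil : Matrix (Fin nb) (Fin d) ℝ) (ytil : Fin nb → ℝ)
    (hXtil : Xtil = Xbar.updateRow i' (Xbar i' - g s' • xu))
    (hytil : ytil = Function.update ybar i' (ybar i' - g s' * yu))
    -- updated uncoded shards, with row i' of shard s' replaced by (x_{s',i'} − x_u, y_{s',i'} − y_u)
    (Xs' : Fin s → Matrix (Fin nb) (Fin d) ℝ) (ys' : Fin s → Fin nb → ℝ)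
    (hXs' : Xs' = Function.update Xs s' ((Xs s').updateRow i' (Xs s' i' - xu)))
    (hys' : ys' = Function.update ys s' (Function.update (ys s') i' (ys s' i' - yu))) :
    (Xtil = ∑ i, g i • Xs' i) ∧ (ytil = ∑ i, g i • ys' i) ∧
    (∀ w w' : Fin d → ℝ,
      (∀ v, ridgeLoss Xtil ytil lam w ≤ ridgeLoss Xtil ytil lam v) →
      (∀ v, ridgeLoss (∑ i, g i • Xs' i) (∑ i, g i • ys' i) lam w'
              ≤ ridgeLoss (∑ i, g i • Xs' i) (∑ i, g i • ys' i) lam v) →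
      w = w') := by
  have hX : Xtil = ∑ i, g i • Xs' i := by
    subst hXs' hXbar hXtil
    ext k j
    by_cases hk : k = i'
    · subst hk
      simp only [Matrix.updateRow_self, Pi.sub_apply, Pi.smul_apply, smul_eq_mul,
        Matrix.sum_apply]
      have h1 : ∀ i : Fin s, (g i • (Function.update Xs s'
          ((Xs s').updateRow k (Xs s' k - xu)) i)) k j =
          g i * Xs i k j - (if i = s' then g i * xu j else 0) := by
        intro i
        by_cases hi : i = s'
        · subst hi; simp [Matrix.updateRow_self]; ring
        · simp [Function.update_of_ne hi, hi]
      rw [Finset.sum_congr rfl (fun i _ => h1 i), Finset.sum_sub_distrib]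
      simp [Finset.sum_ite_eq', Matrix.sum_apply]
    · simp only [Matrix.updateRow_ne hk, Matrix.sum_apply]
      apply Finset.sum_congr rfl
      intro i _
      by_cases hi : i = s'
      · subst hi; simp [Matrix.updateRow_ne hk]
      · simp [Function.update_of_ne hi]
  have hy : ytil = ∑ i, g i • ys' i := by
    subst hys' hybar hytil
    funext k
    by_cases hk : k = i'
    · subst hk
      simp only [Function.update_self, Finset.sum_apply, Pi.smul_apply, smul_eq_mul]
      have h1 : ∀ i : Fin s, g i * (Function.update ys s'
          (Function.update (ys s') k (ys s' k - yu)) i) k =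
          g i * ys i k - (if i = s' then g i * yu else 0) := by
        intro i
        by_cases hi : i = s'
        · subst hi; simp; ring
        · simp [Function.update_of_ne hi, hi]
      rw [Finset.sum_congr rfl (fun i _ => h1 i), Finset.sum_sub_distrib]
      simp [Finset.sum_ite_eq']
    · simp only [Function.update_of_ne hk, Finset.sum_apply, Pi.smul_apply, smul_eq_mul]
      apply Finset.sum_congr rfl
      intro i _
      by_cases hi : i = s'
      · subst hi; simp [Function.update_of_ne hk]
      · simp [Function.update_of_ne hi]
  refine ⟨hX, hy, ?_⟩
  intro w w' hw hw'
  rw [hX, hy] at hw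
  exact ridge_min_unique _ _ lam hlam w w' hw hw'
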